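/- Let $\Lambda = \{\lambda_n\}$ be a nondecreasing sequence of positive reals satisfying $\limsup_{n\to\infty} \frac{\lambda_n \log(n+1)}{n} < \infty$. Then every function $f : [0,1]^2 \to \mathbb{R}$ in the class $\Lambda^{\#}BV$ belongs to the class $HBV$ of functions of bounded harmonic variation. -/

import Mathlib

/-- A finite collection of `m` nonoverlapping open subintervals `(a i, b i)` of `[0,1]`. -/
def Nonoverlap (m : ℕ) (a b : ℕ → ℝ) : Prop :=
  (∀ i < m, 0 ≤ a i ∧ a i < b i ∧ b i ≤ 1) ∧
  ∀ i < m, ∀ j < m, i ≠ j → Set.Ioo (a i) (b i) ∩ Set.Ioo (a j) (b j) = ∅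

/-- `Λ^{#}V_1(f) ≤ M`: all Waterman-type sums in the first variable, with a separate
point `y i` for each interval, are bounded by `M`. -/
def LamSharpV1 (lam : ℕ → ℝ) (f : ℝ → ℝ → ℝ) (M : ℝ) : Prop :=
  ∀ (m : ℕ) (a b y : ℕ → ℝ), Nonoverlap m a b → (∀ i < m, y i ∈ Set.Icc (0:ℝ) 1) →
    ∑ i ∈ Finset.range m, |f (b i) (y i) - f (a i) (y i)| / lam i ≤ M

/-- `Λ^{#}V_2(f) ≤ M`: the symmetric condition in the second variable. -/
def LamSharpV2 (lam : ℕ → ℝ) (f : ℝ → ℝ → ℝ) (M : ℝ) : Prop :=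
  ∀ (m : ℕ) (a b x : ℕ → ℝ), Nonoverlap m a b → (∀ i < m, x i ∈ Set.Icc (0:ℝ) 1) →
    ∑ i ∈ Finset.range m, |f (x i) (b i) - f (x i) (a i)| / lam i ≤ M

/-- The class `Λ^{#}BV`. -/
def LamSharpBV (lam : ℕ → ℝ) (f : ℝ → ℝ → ℝ) : Prop :=
  ∃ M : ℝ, LamSharpV1 lam f M ∧ LamSharpV2 lam f M

/-- `V_1^{#}(f, p(n) ↑ ∞) ≤ M`: for every `n`, every collection of nonoverlapping
intervals of lengths at least `2⁻ⁿ` and every choice of points `y i`, the `ℓ^{p(n)}`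
sum of increments in the first variable is at most `M`. -/
def BVSharpV1 (p : ℕ → ℝ) (f : ℝ → ℝ → ℝ) (M : ℝ) : Prop :=
  ∀ (n m : ℕ) (a b y : ℕ → ℝ), Nonoverlap m a b →
    (∀ i < m, 1 / 2 ^ n ≤ b i - a i) →
    (∀ i < m, y i ∈ Set.Icc (0:ℝ) 1) →
    (∑ i ∈ Finset.range m, |f (b i) (y i) - f (a i) (y i)| ^ p n) ^ (1 / p n) ≤ M

/-- `V_2^{#}(f, p(n) ↑ ∞) ≤ M`: the symmetric condition in the second variable. -/
def BVSharpV2 (p : ℕ → ℝ) (f : ℝ → ℝ → ℝ) (M : ℝ) : Prop :=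
  ∀ (n m : ℕ) (a b x : ℕ → ℝ), Nonoverlap m a b →
    (∀ i < m, 1 / 2 ^ n ≤ b i - a i) →
    (∀ i < m, x i ∈ Set.Icc (0:ℝ) 1) →
    (∑ i ∈ Finset.range m, |f (x i) (b i) - f (x i) (a i)| ^ p n) ^ (1 / p n) ≤ M

/-- The class `BV^{#}(p(n) ↑ ∞)`. -/
def BVSharp (p : ℕ → ℝ) (f : ℝ → ℝ → ℝ) : Prop :=
  ∃ M : ℝ, BVSharpV1 p f M ∧ BVSharpV2 p f M

/-- `HV_1(f) ≤ M`: harmonic variation in the first variable (weights `1/i`,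
here `1/(i+1)` since indexing starts at 0). -/
def HV1 (f : ℝ → ℝ → ℝ) (M : ℝ) : Prop :=
  ∀ (m : ℕ) (a b : ℕ → ℝ) (y : ℝ), Nonoverlap m a b → y ∈ Set.Icc (0:ℝ) 1 →
    ∑ i ∈ Finset.range m, |f (b i) y - f (a i) y| / ((i : ℝ) + 1) ≤ M

/-- `HV_2(f) ≤ M`: harmonic variation in the second variable. -/
def HV2 (f : ℝ → ℝ → ℝ) (M : ℝ) : Prop :=
  ∀ (m : ℕ) (a b : ℕ → ℝ) (x : ℝ), Nonoverlap m a b → x ∈ Set.Icc (0:ℝ) 1 →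
    ∑ j ∈ Finset.range m, |f x (b j) - f x (a j)| / ((j : ℝ) + 1) ≤ M

/-- `HV_{1,2}(f) ≤ M`: mixed harmonic variation. -/
def HV12 (f : ℝ → ℝ → ℝ) (M : ℝ) : Prop :=
  ∀ (m₁ : ℕ) (a₁ b₁ : ℕ → ℝ) (m₂ : ℕ) (a₂ b₂ : ℕ → ℝ),
    Nonoverlap m₁ a₁ b₁ → Nonoverlap m₂ a₂ b₂ →
    ∑ i ∈ Finset.range m₁, ∑ j ∈ Finset.range m₂,
      |f (a₁ i) (a₂ j) - f (a₁ i) (b₂ j) - f (b₁ i) (a₂ j) + f (b₁ i) (b₂ j)| /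
        (((i : ℝ) + 1) * ((j : ℝ) + 1)) ≤ M

/-- The class `HBV` of functions of bounded harmonic variation on `[0,1]²`. -/
def HBV (f : ℝ → ℝ → ℝ) : Prop :=
  ∃ M : ℝ, HV1 f M ∧ HV2 f M ∧ HV12 f M

section GMJauxsec
open Finset


namespace GMJaux

noncomputable def Har (n : ℕ) : ℝ := ∑ i ∈ Finset.range n, 1 / (i + 1 : ℝ)

lemma har_nonneg (n : ℕ) : 0 ≤ Har n := by
  unfold Har; positivity

lemma har_succ (n : ℕ) : Har (n + 1) = Har n + 1 / (n + 1 : ℝ) := by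
  unfold Har; rw [Finset.sum_range_succ]

lemma har_mono : Monotone Har := by
  apply monotone_nat_of_le_succ
  intro n
  rw [har_succ]
  have : 0 ≤ 1 / (n + 1 : ℝ) := by positivity
  linarith

lemma log_ratio (x : ℝ) (hx : 0 < x) : 1 - 1/x ≤ Real.log x := by
  have h := Real.log_le_sub_one_of_pos (x := 1/x) (by positivity)
  rw [Real.log_div one_ne_zero (ne_of_gt hx), Real.log_one] at h
  linarith

lemma har_le_log (n : ℕ) : Har (n + 1) ≤ 1 + Real.log (n + 1 : ℝ) := by
  induction n with
  | zero =>
    simp [Har, Finset.sum_range_one]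
  | succ n ih =>
    rw [har_succ]
    have h1 : Real.log ((n:ℝ) + 2) - Real.log ((n:ℝ) + 1) ≥ 1 / ((n:ℝ) + 2) := by
      have hx : (0:ℝ) < ((n:ℝ) + 2) / ((n:ℝ) + 1) := by positivity
      have h2 := log_ratio (((n:ℝ) + 2) / ((n:ℝ) + 1)) hx
      rw [Real.log_div (by positivity) (by positivity)] at h2
      have he : 1 - 1 / (((n:ℝ) + 2) / ((n:ℝ) + 1)) = 1 / ((n:ℝ) + 2) := by
        rw [one_div_div]; field_simp; norm_num
      rw [he] at h2; linarith
    have e2 : ((n:ℝ) + 1 + 1) = ((n:ℝ) + 2) := by ring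
    push_cast
    rw [e2]
    push_cast at ih
    linarith

lemma sum_inv_le_har (A : Finset ℕ) : (∑ i ∈ A, 1 / (i + 1 : ℝ)) ≤ Har A.card := by
  induction A using Finset.induction_on_max with
  | empty => simp [Har]
  | insert a s hlt ih =>
    have hna : a ∉ s := fun h => lt_irrefl a (hlt a h)
    rw [Finset.sum_insert hna, Finset.card_insert_of_notMem hna, har_succ]
    have hcard : s.card ≤ a := by
      have : s ⊆ Finset.range a := fun x hx => Finset.mem_range.mpr (hlt x hx)
      simpa using Finset.card_le_card this
    have : 1 / (a + 1 : ℝ) ≤ 1 / (s.card + 1 : ℝ) := by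
      apply one_div_le_one_div_of_le (by positivity)
      have := (Nat.cast_le (α := ℝ)).mpr hcard
      linarith
    linarith

/-- swap of triangular double sums -/
lemma tri_swap (n : ℕ) (F : ℕ → ℕ → ℝ) :
    ∑ s ∈ Finset.range n, ∑ t ∈ Finset.Ico s n, F s t
      = ∑ t ∈ Finset.range n, ∑ s ∈ Finset.range (t + 1), F s t := by
  induction n with
  | zero => simp
  | succ n ih =>
    rw [Finset.sum_range_succ (f := fun t => ∑ s ∈ Finset.range (t + 1), F s t)]
    have h1 : ∀ s ∈ Finset.range n, ∑ t ∈ Finset.Ico s (n+1), F s t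
        = (∑ t ∈ Finset.Ico s n, F s t) + F s n := by
      intro s hs
      exact Finset.sum_Ico_succ_top (le_of_lt (Finset.mem_range.mp hs)) _
    rw [Finset.sum_range_succ (f := fun s => ∑ t ∈ Finset.Ico s (n+1), F s t)]
    rw [Finset.sum_congr rfl h1, Finset.sum_add_distrib, ih]
    have : ∑ t ∈ Finset.Ico n (n+1), F n t = F n n := by simp
    rw [this]
    rw [Finset.sum_range_succ (f := fun s => F s n)]
    ring

lemma geom_Ico (τ : ℝ) (a b : ℕ) (hab : a ≤ b) :
    ∑ s ∈ Finset.Ico a b, τ / 2 ^ (s+1) = τ / 2 ^ a - τ / 2 ^ b := by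
  induction b with
  | zero => interval_cases a; simp
  | succ b ih =>
    rcases Nat.lt_or_ge a (b+1) with h | h
    · have hab' : a ≤ b := Nat.lt_succ_iff.mp h
      rw [Finset.sum_Ico_succ_top hab', ih hab']
      have : (2:ℝ) ^ (b+1) = 2 * 2 ^ b := by ring
      field_simp
      ring
    · have : a = b + 1 := le_antisymm hab h
      subst this
      simp

/-- telescoping -/
lemma telescope_Ico (F : ℕ → ℝ) (a b : ℕ) (hab : a ≤ b) :
    ∑ ℓ ∈ Finset.Ico a b, (F (ℓ+1) - F ℓ) = F b - F a := by
  induction b with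
  | zero => interval_cases a; simp
  | succ b ih =>
    rcases Nat.lt_or_ge a (b+1) with h | h
    · have hab' : a ≤ b := Nat.lt_succ_iff.mp h
      rw [Finset.sum_Ico_succ_top hab', ih hab']
      ring
    · have : a = b + 1 := le_antisymm hab h
      subst this
      simp


open scoped Classical in
noncomputable def Aset (m₁ m₂ : ℕ) (d : ℕ → ℕ → ℝ) (τ : ℝ) (s : ℕ) : Finset ℕ :=
  (Finset.range m₁).filter (fun i => ∃ j ∈ Finset.range m₂, τ < d i j * 2 ^ (s + 1))

lemma har_sq_step (lam : ℕ → ℝ) (hpos : ∀ n, 0 < lam n) (C : ℝ)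
    (hC : ∀ n : ℕ, lam n * Real.log ((n:ℝ) + 2) / ((n:ℝ) + 1) ≤ C) (ℓ : ℕ) :
    (Har (ℓ+1))^2 - (Har ℓ)^2 ≤ 5 * C * (1 / lam ℓ) := by
  have hs := har_succ ℓ
  have h0 : 0 ≤ Har ℓ := har_nonneg ℓ
  have h1 : Har (ℓ+1) ≤ 1 + Real.log ((ℓ:ℝ) + 1) := har_le_log ℓ
  have hl2 : Real.log 2 ≤ Real.log ((ℓ:ℝ) + 2) := by
    apply Real.log_le_log (by norm_num)
    have : (0:ℝ) ≤ (ℓ:ℝ) := Nat.cast_nonneg ℓ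
    linarith
  have hl1 : Real.log ((ℓ:ℝ) + 1) ≤ Real.log ((ℓ:ℝ) + 2) := by
    apply Real.log_le_log (by positivity)
    linarith
  have hlog2 : (0.6931471803 : ℝ) < Real.log 2 := Real.log_two_gt_d9
  have key : 2 * (1 + Real.log ((ℓ:ℝ) + 1)) ≤ 5 * Real.log ((ℓ:ℝ) + 2) := by
    nlinarith
  have hinv : (0:ℝ) < 1 / ((ℓ:ℝ) + 1) := by positivity
  have e1 : (Har (ℓ+1))^2 - (Har ℓ)^2 = (Har ℓ + Har (ℓ+1)) * (1 / ((ℓ:ℝ)+1)) := by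
    rw [hs]; push_cast; ring
  have e2 : (Har ℓ + Har (ℓ+1)) * (1 / ((ℓ:ℝ)+1)) ≤ (2 * (1 + Real.log ((ℓ:ℝ) + 1))) * (1 / ((ℓ:ℝ)+1)) := by
    apply mul_le_mul_of_nonneg_right _ (le_of_lt hinv)
    have : Har ℓ ≤ Har (ℓ+1) := har_mono (Nat.le_succ ℓ)
    linarith
  have e3 : (2 * (1 + Real.log ((ℓ:ℝ) + 1))) * (1 / ((ℓ:ℝ)+1)) ≤ (5 * Real.log ((ℓ:ℝ) + 2)) * (1 / ((ℓ:ℝ)+1)) := by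
    apply mul_le_mul_of_nonneg_right key (le_of_lt hinv)
  have e4 : (5 * Real.log ((ℓ:ℝ) + 2)) * (1 / ((ℓ:ℝ)+1)) ≤ 5 * C * (1 / lam ℓ) := by
    have hlam := hpos ℓ
    have hq : Real.log ((ℓ:ℝ) + 2) / ((ℓ:ℝ)+1) ≤ C / lam ℓ := by
      have e : Real.log ((ℓ:ℝ) + 2) / ((ℓ:ℝ)+1)
          = (lam ℓ * Real.log ((ℓ:ℝ) + 2) / ((ℓ:ℝ)+1)) / lam ℓ := by
        field_simp
      rw [e]
      gcongr
      exact hC ℓ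
    calc (5 * Real.log ((ℓ:ℝ) + 2)) * (1 / ((ℓ:ℝ)+1)) = 5 * (Real.log ((ℓ:ℝ) + 2) / ((ℓ:ℝ)+1)) := by ring
    _ ≤ 5 * (C / lam ℓ) := by linarith
    _ = 5 * C * (1 / lam ℓ) := by ring
  linarith [e1 ▸ le_trans e2 (le_trans e3 e4)]


lemma har_sq_diff_le (lam : ℕ → ℝ) (hpos : ∀ n, 0 < lam n) (C : ℝ)
    (hC : ∀ n : ℕ, lam n * Real.log ((n:ℝ) + 2) / ((n:ℝ) + 1) ≤ C)
    (n' n : ℕ) (h : n' ≤ n) :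
    (Har n)^2 - (Har n')^2
      ≤ 5 * C * ((∑ ℓ ∈ Finset.range n, 1 / lam ℓ) - (∑ ℓ ∈ Finset.range n', 1 / lam ℓ)) := by
  have htel := telescope_Ico (fun k => (Har k)^2) n' n h
  rw [← htel]
  have hsum : ∑ ℓ ∈ Finset.Ico n' n, ((Har (ℓ+1))^2 - (Har ℓ)^2)
      ≤ ∑ ℓ ∈ Finset.Ico n' n, 5 * C * (1 / lam ℓ) := by
    apply Finset.sum_le_sum
    intro ℓ _
    exact har_sq_step lam hpos C hC ℓ
  have e : ∑ ℓ ∈ Finset.Ico n' n, 5 * C * (1 / lam ℓ)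
      = 5 * C * ((∑ ℓ ∈ Finset.range n, 1 / lam ℓ) - (∑ ℓ ∈ Finset.range n', 1 / lam ℓ)) := by
    rw [← Finset.sum_Ico_eq_sub _ h, Finset.mul_sum]
  rw [e] at hsum
  exact hsum

lemma rowEstimate (lam : ℕ → ℝ) (hpos : ∀ n, 0 < lam n) (C : ℝ)
    (hC : ∀ n : ℕ, lam n * Real.log ((n:ℝ) + 2) / ((n:ℝ) + 1) ≤ C)
    (m₁ m₂ : ℕ) (d : ℕ → ℕ → ℝ) (τ N : ℝ) (hτ : 0 ≤ τ) (hN : 0 ≤ N)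
    (hSel : ∀ (k : ℕ) (r c : ℕ → ℕ), Set.InjOn r (Finset.range k) →
      (∀ ℓ < k, r ℓ < m₁) → (∀ ℓ < k, c ℓ < m₂) →
      ∑ ℓ ∈ Finset.range k, d (r ℓ) (c ℓ) / lam ℓ ≤ N)
    (T : ℕ) :
    ∑ s ∈ Finset.range (T+1), (τ / 2^(s+1)) * (Har ((Aset m₁ m₂ d τ s).card))^2
      ≤ 10 * C * N := by
  classical
  have hCpos : 0 < C := by
    have h0 := hC 0
    have : (0:ℝ) < lam 0 * Real.log 2 := by
      apply mul_pos (hpos 0)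
      have := Real.log_two_gt_d9; linarith
    simp only [Nat.cast_zero] at h0
    norm_num at h0
    nlinarith [h0]
  set A : ℕ → Finset ℕ := Aset m₁ m₂ d τ with hAdef
  -- membership unfolding
  have hmemA : ∀ s i, i ∈ A s ↔ (i ∈ Finset.range m₁ ∧ ∃ j ∈ Finset.range m₂, τ < d i j * 2 ^ (s+1)) := by
    intro s i
    simp [hAdef, Aset, Finset.mem_filter]
  have hdpos : ∀ s i j, τ < d i j * 2 ^ (s+1) → 0 < d i j := by
    intro s i j hlt
    have h2 : (0:ℝ) < 2 ^ (s+1) := by positivity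
    nlinarith
  have hAmono : ∀ s t, s ≤ t → A s ⊆ A t := by
    intro s t hst
    have step : ∀ u, A u ⊆ A (u+1) := by
      intro u i hi
      rw [hmemA] at hi ⊢
      obtain ⟨h1, j, hj, hd⟩ := hi
      refine ⟨h1, j, hj, ?_⟩
      have hd0 := hdpos u i j hd
      have : d i j * 2 ^ (u+1) ≤ d i j * 2 ^ (u+1+1) := by
        apply mul_le_mul_of_nonneg_left _ (le_of_lt hd0)
        apply pow_le_pow_right₀ (by norm_num) (Nat.le_succ _)
      linarith
    have step' : ∀ u, A u ≤ A (u+1) := step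
    exact monotone_nat_of_le_succ step' hst
  set n : ℕ → ℕ := fun s => (A s).card with hndef
  set np : ℕ → ℕ := fun s => match s with | 0 => 0 | Nat.succ t => n t with hnpdef
  have hnmono : ∀ s t, s ≤ t → n s ≤ n t := fun s t hst => Finset.card_le_card (hAmono s t hst)
  have hnpn : ∀ s, np s ≤ n s := by
    intro s
    match s with
    | 0 => exact Nat.zero_le _
    | Nat.succ t => exact hnmono t (t+1) (Nat.le_succ t)
  set L : ℕ → ℝ := fun k => ∑ ℓ ∈ Finset.range k, 1 / lam ℓ with hLdef
  -- the enumerating list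
  set lst : ℕ → List ℕ := fun s => Nat.rec ((A 0).sort (· ≤ ·))
    (fun t ih => ih ++ ((A (t+1)) \ (A t)).sort (· ≤ ·)) s with hlstdef
  have hlst0 : lst 0 = (A 0).sort (· ≤ ·) := rfl
  have hlstS : ∀ t, lst (t+1) = lst t ++ ((A (t+1)) \ (A t)).sort (· ≤ ·) := fun t => rfl
  have hlen : ∀ s, (lst s).length = n s := by
    intro s
    induction s with
    | zero => simp [hlst0, hndef]
    | succ t ih =>
      rw [hlstS t, List.length_append, ih, Finset.length_sort,
        Finset.card_sdiff_of_subset (hAmono t (t+1) (Nat.le_succ t))]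
      have h1 := hnmono t (t+1) (Nat.le_succ t)
      have e1 : (A t).card = n t := rfl
      have e2 : (A (t+1)).card = n (t+1) := rfl
      rw [e1, e2]
      omega
  have hmemlst : ∀ s i, i ∈ lst s → i ∈ A s := by
    intro s
    induction s with
    | zero => intro i hi; rw [hlst0] at hi; exact (Finset.mem_sort _).mp hi
    | succ t ih =>
      intro i hi
      rw [hlstS t, List.mem_append] at hi
      rcases hi with hi | hi
      · exact hAmono t (t+1) (Nat.le_succ t) (ih i hi)
      · exact (Finset.mem_sdiff.mp ((Finset.mem_sort _).mp hi)).1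
  have hnd : ∀ s, (lst s).Nodup := by
    intro s
    induction s with
    | zero => rw [hlst0]; exact Finset.sort_nodup _ _
    | succ t ih =>
      rw [hlstS t]
      apply List.Nodup.append ih (Finset.sort_nodup _ _)
      intro x hx hx'
      have h1 : x ∈ A t := hmemlst t x hx
      have h2 := (Finset.mem_sdiff.mp ((Finset.mem_sort _).mp hx')).2
      exact h2 h1
  have hpre : ∀ s t, s ≤ t → lst s <+: lst t := by
    intro s t hst
    induction t with
    | zero => cases Nat.le_zero.mp hst; exact List.prefix_refl _
    | succ t iht =>
      rcases Nat.lt_or_ge s (t+1) with h | h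
      · have := iht (Nat.lt_succ_iff.mp h)
        rw [hlstS t]
        exact this.trans (List.prefix_append _ _)
      · have : s = t + 1 := le_antisymm hst h
        subst this; exact List.prefix_refl _
  set r : ℕ → ℕ := fun ℓ => (lst T).getD ℓ 0 with hrdef
  have hrA : ∀ s, s ≤ T → ∀ ℓ, ℓ < n s → r ℓ ∈ A s := by
    intro s hsT ℓ hℓ
    have hℓs : ℓ < (lst s).length := by rw [hlen s]; exact hℓ
    have hℓT : ℓ < (lst T).length := by
      rw [hlen T]; exact lt_of_lt_of_le hℓ (hnmono s T hsT)
    have hget : (lst s)[ℓ] = (lst T)[ℓ] := (hpre s T hsT).getElem hℓs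
    have : r ℓ = (lst s)[ℓ] := by
      rw [hrdef]; simp only []
      rw [List.getD_eq_getElem _ _ hℓT, hget]
    rw [this]
    exact hmemlst s _ (List.getElem_mem hℓs)
  have hinj : Set.InjOn r (Finset.range (n T)) := by
    intro x hx y hy hxy
    simp only [Finset.coe_range, Set.mem_Iio] at hx hy
    have hxl : x < (lst T).length := by rw [hlen T]; exact hx
    have hyl : y < (lst T).length := by rw [hlen T]; exact hy
    have : (lst T)[x] = (lst T)[y] := by
      rw [← List.getD_eq_getElem (lst T) 0 hxl, ← List.getD_eq_getElem (lst T) 0 hyl]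
      exact hxy
    exact ((hnd T).getElem_inj_iff).mp this
  -- column choice
  have Hcc : ∀ i, ∃ j, (∀ s, s ≤ T → i ∈ A s → (j < m₂ ∧ τ < d i j * 2 ^ (s+1))) := by
    intro i
    by_cases h : ∃ t, i ∈ A t
    · have hfind := Nat.find_spec h
      obtain ⟨h1, j, hj, hd⟩ := (hmemA _ i).mp hfind
      refine ⟨j, fun s hsT his => ⟨Finset.mem_range.mp hj, ?_⟩⟩
      have hle : Nat.find h ≤ s := Nat.find_min' h his
      have hd0 := hdpos _ i j hd
      have : d i j * 2 ^ (Nat.find h + 1) ≤ d i j * 2 ^ (s+1) := by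
        apply mul_le_mul_of_nonneg_left _ (le_of_lt hd0)
        apply pow_le_pow_right₀ (by norm_num)
        omega
      linarith
    · exact ⟨0, fun s hsT his => absurd ⟨s, his⟩ h⟩
  choose cc hcc using Hcc
  -- budget
  have hpart : ∀ (F : ℕ → ℝ) (t : ℕ),
      ∑ ℓ ∈ Finset.range (n t), F ℓ
        = ∑ s ∈ Finset.range (t+1), ∑ ℓ ∈ Finset.Ico (np s) (n s), F ℓ := by
    intro F t
    induction t with
    | zero =>
      rw [Finset.sum_range_one]
      have e0 : np 0 = 0 := rfl
      rw [e0, Finset.range_eq_Ico]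
    | succ t ih =>
      rw [Finset.sum_range_succ (f := fun s => ∑ ℓ ∈ Finset.Ico (np s) (n s), F ℓ), ← ih]
      have hnp1 : np (t+1) = n t := rfl
      rw [hnp1]
      simp only [Finset.range_eq_Ico]
      exact (Finset.sum_Ico_consecutive F (Nat.zero_le _) (hnmono t (t+1) (Nat.le_succ t))).symm
  have budget : ∑ s ∈ Finset.range (T+1), (τ / 2^(s+1)) * (L (n s) - L (np s)) ≤ N := by
    have hr1 : ∀ ℓ, ℓ < n T → r ℓ < m₁ := by
      intro ℓ hℓ
      have := hrA T le_rfl ℓ hℓ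
      exact Finset.mem_range.mp ((hmemA T (r ℓ)).mp this).1
    have hc1 : ∀ ℓ, ℓ < n T → cc (r ℓ) < m₂ := by
      intro ℓ hℓ
      exact (hcc (r ℓ) T le_rfl (hrA T le_rfl ℓ hℓ)).1
    have hkey := hSel (n T) r (fun ℓ => cc (r ℓ)) hinj hr1 hc1
    have hlow : ∑ s ∈ Finset.range (T+1), (τ / 2^(s+1)) * (L (n s) - L (np s))
        ≤ ∑ ℓ ∈ Finset.range (n T), d (r ℓ) (cc (r ℓ)) / lam ℓ := by
      rw [hpart (fun ℓ => d (r ℓ) (cc (r ℓ)) / lam ℓ) T]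
      apply Finset.sum_le_sum
      intro s hs
      have hsT : s ≤ T := Nat.lt_succ_iff.mp (Finset.mem_range.mp hs)
      have e : (τ / 2^(s+1)) * (L (n s) - L (np s))
          = ∑ ℓ ∈ Finset.Ico (np s) (n s), (τ / 2^(s+1)) * (1 / lam ℓ) := by
        rw [← Finset.mul_sum, hLdef]
        simp only []
        rw [Finset.sum_Ico_eq_sub _ (hnpn s)]
      rw [e]
      apply Finset.sum_le_sum
      intro ℓ hℓ
      obtain ⟨hℓ1, hℓ2⟩ := Finset.mem_Ico.mp hℓ
      have hrs := hrA s hsT ℓ hℓ2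
      have hcs := hcc (r ℓ) s hsT hrs
      have h2p : (0:ℝ) < 2 ^ (s+1) := by positivity
      have hdv : τ / 2^(s+1) < d (r ℓ) (cc (r ℓ)) := by
        rw [div_lt_iff₀ h2p]
        exact hcs.2
      have hlamp := hpos ℓ
      calc (τ / 2^(s+1)) * (1 / lam ℓ) = (τ / 2^(s+1)) / lam ℓ := by ring
      _ ≤ d (r ℓ) (cc (r ℓ)) / lam ℓ := by gcongr
    linarith
  -- the telescoping identity for Har (n s) ^ 2
  have hHar0 : Har 0 = 0 := by simp [Har]
  have htel : ∀ s, (Har (n s))^2 = ∑ s' ∈ Finset.range (s+1), ((Har (n s'))^2 - (Har (np s'))^2) := by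
    intro s
    induction s with
    | zero => simp [hnpdef, hHar0]
    | succ t ih =>
      rw [Finset.sum_range_succ, ← ih]
      have : np (t+1) = n t := rfl
      rw [this]; ring
  -- main chain
  have hDnn : ∀ s, 0 ≤ (Har (n s))^2 - (Har (np s))^2 := by
    intro s
    have h1 : Har (np s) ≤ Har (n s) := har_mono (hnpn s)
    have h2 : 0 ≤ Har (np s) := har_nonneg _
    nlinarith
  calc ∑ s ∈ Finset.range (T+1), (τ / 2^(s+1)) * (Har (n s))^2
      = ∑ s ∈ Finset.range (T+1), ∑ s' ∈ Finset.range (s+1),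
          (τ / 2^(s+1)) * ((Har (n s'))^2 - (Har (np s'))^2) := by
        apply Finset.sum_congr rfl
        intro s _
        rw [htel s, Finset.mul_sum]
    _ = ∑ s' ∈ Finset.range (T+1), ∑ s ∈ Finset.Ico s' (T+1),
          (τ / 2^(s+1)) * ((Har (n s'))^2 - (Har (np s'))^2) := by
        rw [tri_swap (T+1) (fun s' s => (τ / 2^(s+1)) * ((Har (n s'))^2 - (Har (np s'))^2))]
    _ = ∑ s' ∈ Finset.range (T+1),
          ((Har (n s'))^2 - (Har (np s'))^2) * (τ / 2^(s') - τ / 2^(T+1)) := by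
        apply Finset.sum_congr rfl
        intro s' hs'
        have hs'T : s' ≤ T := Nat.lt_succ_iff.mp (Finset.mem_range.mp hs')
        rw [← geom_Ico τ s' (T+1) (by omega), Finset.mul_sum]
        apply Finset.sum_congr rfl
        intro s _
        ring
    _ ≤ ∑ s' ∈ Finset.range (T+1), ((Har (n s'))^2 - (Har (np s'))^2) * (τ / 2^(s')) := by
        apply Finset.sum_le_sum
        intro s' _
        apply mul_le_mul_of_nonneg_left _ (hDnn s')
        have : (0:ℝ) ≤ τ / 2^(T+1) := by positivity
        linarith
    _ = ∑ s' ∈ Finset.range (T+1), 2 * ((τ / 2^(s'+1)) * ((Har (n s'))^2 - (Har (np s'))^2)) := by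
        apply Finset.sum_congr rfl
        intro s' _
        have : (2:ℝ)^(s'+1) = 2 * 2^(s') := by ring
        rw [this]
        field_simp
    _ ≤ ∑ s' ∈ Finset.range (T+1), 2 * ((τ / 2^(s'+1)) * (5 * C * (L (n s') - L (np s')))) := by
        apply Finset.sum_le_sum
        intro s' _
        have hτ2 : (0:ℝ) ≤ τ / 2^(s'+1) := by positivity
        have := har_sq_diff_le lam hpos C hC (np s') (n s') (hnpn s')
        nlinarith [this, hτ2]
    _ = 10 * C * ∑ s' ∈ Finset.range (T+1), (τ / 2^(s'+1)) * (L (n s') - L (np s')) := by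
        rw [Finset.mul_sum]
        apply Finset.sum_congr rfl
        intro s' _
        ring
    _ ≤ 10 * C * N := by
        apply mul_le_mul_of_nonneg_left budget
        linarith

lemma matrixBound (lam : ℕ → ℝ) (hpos : ∀ n, 0 < lam n) (C : ℝ)
    (hC : ∀ n : ℕ, lam n * Real.log ((n:ℝ) + 2) / ((n:ℝ) + 1) ≤ C)
    (m₁ m₂ : ℕ) (d : ℕ → ℕ → ℝ) (N : ℝ) (hN : 0 ≤ N)
    (hd0 : ∀ i j, 0 ≤ d i j)
    (hSelR : ∀ (k : ℕ) (r c : ℕ → ℕ), Set.InjOn r (Finset.range k) →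
      (∀ ℓ < k, r ℓ < m₁) → (∀ ℓ < k, c ℓ < m₂) →
      ∑ ℓ ∈ Finset.range k, d (r ℓ) (c ℓ) / lam ℓ ≤ N)
    (hSelC : ∀ (k : ℕ) (r c : ℕ → ℕ), Set.InjOn c (Finset.range k) →
      (∀ ℓ < k, r ℓ < m₁) → (∀ ℓ < k, c ℓ < m₂) →
      ∑ ℓ ∈ Finset.range k, d (r ℓ) (c ℓ) / lam ℓ ≤ N) :
    ∑ i ∈ Finset.range m₁, ∑ j ∈ Finset.range m₂,
      d i j / (((i:ℝ) + 1) * ((j:ℝ) + 1)) ≤ 20 * C * N := by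
  classical
  set τ : ℝ := N * lam 0 with hτdef
  have hτ0 : 0 ≤ τ := mul_nonneg hN (le_of_lt (hpos 0))
  have hd_le : ∀ i j, i < m₁ → j < m₂ → d i j ≤ τ := by
    intro i j hi hj
    have h := hSelR 1 (fun _ => i) (fun _ => j) ?_ ?_ ?_
    · rw [Finset.sum_range_one] at h
      exact (div_le_iff₀ (hpos 0)).mp h
    · intro a ha b hb _
      simp only [Finset.coe_range, Set.mem_Iio] at ha hb
      omega
    · intro ℓ _; exact hi
    · intro ℓ _; exact hj
  have hex : ∀ i j, 0 < d i j → ∃ s : ℕ, τ < d i j * 2 ^ (s+1) := by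
    intro i j hd
    obtain ⟨t, ht⟩ := pow_unbounded_of_one_lt (τ / d i j) (y := 2) one_lt_two
    refine ⟨t, ?_⟩
    have h1 : τ < 2 ^ t * d i j := (div_lt_iff₀ hd).mp ht
    have h2 : (2:ℝ) ^ t ≤ 2 ^ (t+1) := pow_le_pow_right₀ (by norm_num) (Nat.le_succ _)
    nlinarith
  have hlevex : ∀ i j, ∃ s : ℕ, ((i < m₁ ∧ j < m₂ ∧ 0 < d i j) →
      (τ < d i j * 2 ^ (s+1) ∧ d i j ≤ τ / 2 ^ s)) := by
    intro i j
    by_cases h : i < m₁ ∧ j < m₂ ∧ 0 < d i j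
    · obtain ⟨hi, hj, hd⟩ := h
      refine ⟨Nat.find (hex i j hd), fun _ => ⟨Nat.find_spec (hex i j hd), ?_⟩⟩
      rcases h0 : Nat.find (hex i j hd) with _ | t
      · simp only [pow_zero, div_one]
        exact hd_le i j hi hj
      · have hmin := Nat.find_min (hex i j hd) (m := t) (by omega)
        push_neg at hmin
        rw [le_div_iff₀ (by positivity)]
        exact hmin
    · exact ⟨0, fun h' => absurd h' h⟩
  choose lev hlev using hlevex
  set grid : Finset (ℕ × ℕ) := (Finset.range m₁) ×ˢ (Finset.range m₂) with hgriddef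
  set fpos : Finset (ℕ × ℕ) := grid.filter (fun p => 0 < d p.1 p.2) with hfposdef
  set T : ℕ := fpos.sup (fun p => lev p.1 p.2) with hTdef
  have hgridmem : ∀ p : ℕ × ℕ, p ∈ grid ↔ (p.1 < m₁ ∧ p.2 < m₂) := by
    intro p
    simp [hgriddef, Finset.mem_product]
  have hfpmem : ∀ p : ℕ × ℕ, p ∈ fpos ↔ (p.1 < m₁ ∧ p.2 < m₂ ∧ 0 < d p.1 p.2) := by
    intro p
    rw [hfposdef, Finset.mem_filter, hgridmem]
    tauto
  have hlevle : ∀ p ∈ fpos, lev p.1 p.2 ∈ Finset.range (T+1) := by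
    intro p hp
    rw [Finset.mem_range, Nat.lt_succ_iff]
    exact Finset.le_sup (f := fun p : ℕ × ℕ => lev p.1 p.2) hp
  -- weight function
  set w : ℕ × ℕ → ℝ := fun p => (1 / ((p.1:ℝ) + 1)) * (1 / ((p.2:ℝ) + 1)) with hwdef
  have hw0 : ∀ p, 0 ≤ w p := by intro p; rw [hwdef]; positivity
  set W : ℕ → ℝ := fun s => ∑ p ∈ fpos.filter (fun p => lev p.1 p.2 = s), w p with hWdef
  have hW0 : ∀ s, 0 ≤ W s := by
    intro s; rw [hWdef]
    exact Finset.sum_nonneg (fun p _ => hw0 p)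
  -- step 1 : target sum equals sum over fpos and is bounded by level sums
  have hsplit : ∑ p ∈ grid, d p.1 p.2 * w p = ∑ p ∈ fpos, d p.1 p.2 * w p := by
    rw [hfposdef]
    rw [← Finset.sum_filter_add_sum_filter_not grid (fun p => 0 < d p.1 p.2) (fun p => d p.1 p.2 * w p)]
    have : ∑ p ∈ grid.filter (fun p => ¬ 0 < d p.1 p.2), d p.1 p.2 * w p = 0 := by
      apply Finset.sum_eq_zero
      intro p hp
      have h1 := (Finset.mem_filter.mp hp).2
      have h2 := hd0 p.1 p.2
      have : d p.1 p.2 = 0 := le_antisymm (not_lt.mp h1) h2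
      rw [this, zero_mul]
    rw [this, add_zero]
  have hfiber : ∑ p ∈ fpos, d p.1 p.2 * w p
      = ∑ s ∈ Finset.range (T+1), ∑ p ∈ fpos.filter (fun p => lev p.1 p.2 = s), d p.1 p.2 * w p :=
    (Finset.sum_fiberwise_of_maps_to hlevle _).symm
  have hfiberle : ∀ s, ∑ p ∈ fpos.filter (fun p => lev p.1 p.2 = s), d p.1 p.2 * w p
      ≤ (τ / 2 ^ s) * W s := by
    intro s
    rw [hWdef, Finset.mul_sum]
    apply Finset.sum_le_sum
    intro p hp
    rw [Finset.mem_filter] at hp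
    obtain ⟨hp1, hp2⟩ := hp
    obtain ⟨hi, hj, hd⟩ := (hfpmem p).mp hp1
    have := (hlev p.1 p.2 ⟨hi, hj, hd⟩).2
    rw [hp2] at this
    exact mul_le_mul_of_nonneg_right this (hw0 p)
  -- capacity
  set A1 : ℕ → Finset ℕ := Aset m₁ m₂ d τ with hA1def
  set A2 : ℕ → Finset ℕ := Aset m₂ m₁ (fun j i => d i j) τ with hA2def
  have hcap : ∀ s, ∑ s' ∈ Finset.range (s+1), W s' ≤ Har (A1 s).card * Har (A2 s).card := by
    intro s
    set U : Finset (ℕ × ℕ) := fpos.filter (fun p => lev p.1 p.2 ≤ s) with hUdef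
    have hUmaps : ∀ p ∈ U, lev p.1 p.2 ∈ Finset.range (s+1) := by
      intro p hp
      rw [Finset.mem_range, Nat.lt_succ_iff]
      exact (Finset.mem_filter.mp hp).2
    have e1 : ∑ s' ∈ Finset.range (s+1), W s' = ∑ p ∈ U, w p := by
      rw [← Finset.sum_fiberwise_of_maps_to hUmaps w]
      apply Finset.sum_congr rfl
      intro s' hs'
      have hs's : s' ≤ s := Nat.lt_succ_iff.mp (Finset.mem_range.mp hs')
      rw [hWdef, hUdef]
      apply Finset.sum_congr _ (fun _ _ => rfl)
      ext p
      simp only [Finset.mem_filter]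
      constructor
      · rintro ⟨hp, he⟩
        exact ⟨⟨hp, he ▸ hs's⟩, he⟩
      · rintro ⟨⟨hp, _⟩, he⟩
        exact ⟨hp, he⟩
    rw [e1]
    have hsub : U ⊆ (A1 s) ×ˢ (A2 s) := by
      intro p hp
      rw [Finset.mem_filter] at hp
      obtain ⟨hp1, hp2⟩ := hp
      obtain ⟨hi, hj, hd⟩ := (hfpmem p).mp hp1
      have hlp := (hlev p.1 p.2 ⟨hi, hj, hd⟩).1
      have h2le : d p.1 p.2 * 2 ^ (lev p.1 p.2 + 1) ≤ d p.1 p.2 * 2 ^ (s+1) := by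
        apply mul_le_mul_of_nonneg_left _ (le_of_lt hd)
        apply pow_le_pow_right₀ (by norm_num)
        omega
      have hkey : τ < d p.1 p.2 * 2 ^ (s+1) := lt_of_lt_of_le hlp h2le
      rw [Finset.mem_product]
      constructor
      · rw [hA1def]
        unfold Aset
        rw [Finset.mem_filter]
        exact ⟨Finset.mem_range.mpr hi, p.2, Finset.mem_range.mpr hj, hkey⟩
      · rw [hA2def]
        unfold Aset
        rw [Finset.mem_filter]
        exact ⟨Finset.mem_range.mpr hj, p.1, Finset.mem_range.mpr hi, hkey⟩
    calc ∑ p ∈ U, w p ≤ ∑ p ∈ (A1 s) ×ˢ (A2 s), w p := by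
          apply Finset.sum_le_sum_of_subset_of_nonneg hsub
          intro p _ _; exact hw0 p
    _ = (∑ i ∈ A1 s, 1 / ((i:ℝ)+1)) * (∑ j ∈ A2 s, 1 / ((j:ℝ)+1)) := by
          rw [Finset.sum_mul_sum]
          rw [Finset.sum_product]
    _ ≤ Har (A1 s).card * Har (A2 s).card := by
          apply mul_le_mul (sum_inv_le_har _) (sum_inv_le_har _)
          · positivity
          · exact har_nonneg _
  -- Abel
  have habel : ∑ s ∈ Finset.range (T+1), (τ / 2 ^ s) * W s
      ≤ 2 * ∑ t ∈ Finset.range (T+1), (τ / 2 ^ (t+1)) * (Har (A1 t).card * Har (A2 t).card) := by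
    have e1 : ∀ s, s ≤ T → (τ / 2 ^ s) * W s
        = (∑ t ∈ Finset.Ico s (T+1), (τ / 2 ^ (t+1)) * W s) + (τ / 2 ^ (T+1)) * W s := by
      intro s hs
      rw [← Finset.sum_mul, geom_Ico τ s (T+1) (by omega)]
      ring
    rw [Finset.sum_congr rfl (fun s hs => e1 s (Nat.lt_succ_iff.mp (Finset.mem_range.mp hs)))]
    rw [Finset.sum_add_distrib]
    rw [tri_swap (T+1) (fun s t => (τ / 2 ^ (t+1)) * W s)]
    have h2 : ∑ t ∈ Finset.range (T+1), ∑ s ∈ Finset.range (t+1), (τ / 2 ^ (t+1)) * W s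
        = ∑ t ∈ Finset.range (T+1), (τ / 2 ^ (t+1)) * (∑ s' ∈ Finset.range (t+1), W s') := by
      apply Finset.sum_congr rfl
      intro t _
      rw [Finset.mul_sum]
    rw [h2]
    have h3 : ∑ t ∈ Finset.range (T+1), (τ / 2 ^ (t+1)) * (∑ s' ∈ Finset.range (t+1), W s')
        ≤ ∑ t ∈ Finset.range (T+1), (τ / 2 ^ (t+1)) * (Har (A1 t).card * Har (A2 t).card) := by
      apply Finset.sum_le_sum
      intro t _
      apply mul_le_mul_of_nonneg_left (hcap t) (by positivity)
    have h4 : ∑ s ∈ Finset.range (T+1), (τ / 2 ^ (T+1)) * W s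
        ≤ ∑ t ∈ Finset.range (T+1), (τ / 2 ^ (t+1)) * (Har (A1 t).card * Har (A2 t).card) := by
      calc ∑ s ∈ Finset.range (T+1), (τ / 2 ^ (T+1)) * W s
          = (τ / 2 ^ (T+1)) * (∑ s' ∈ Finset.range (T+1), W s') := by rw [Finset.mul_sum]
      _ ≤ (τ / 2 ^ (T+1)) * (Har (A1 T).card * Har (A2 T).card) := by
          apply mul_le_mul_of_nonneg_left (hcap T) (by positivity)
      _ ≤ ∑ t ∈ Finset.range (T+1), (τ / 2 ^ (t+1)) * (Har (A1 t).card * Har (A2 t).card) := by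
          apply Finset.single_le_sum (f := fun t => (τ / 2 ^ (t+1)) * (Har (A1 t).card * Har (A2 t).card))
          · intro t _
            have := har_nonneg (A1 t).card
            have := har_nonneg (A2 t).card
            positivity
          · exact Finset.self_mem_range_succ T
    linarith
  -- AM-GM and the two row estimates
  have hamgm : 2 * ∑ t ∈ Finset.range (T+1), (τ / 2 ^ (t+1)) * (Har (A1 t).card * Har (A2 t).card)
      ≤ ∑ t ∈ Finset.range (T+1), (τ / 2 ^ (t+1)) * (Har (A1 t).card)^2
        + ∑ t ∈ Finset.range (T+1), (τ / 2 ^ (t+1)) * (Har (A2 t).card)^2 := by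
    rw [Finset.mul_sum, ← Finset.sum_add_distrib]
    apply Finset.sum_le_sum
    intro t _
    have h1 : 2 * (Har (A1 t).card * Har (A2 t).card) ≤ (Har (A1 t).card)^2 + (Har (A2 t).card)^2 := by
      nlinarith [sq_nonneg (Har (A1 t).card - Har (A2 t).card)]
    have h2 : (0:ℝ) ≤ τ / 2 ^ (t+1) := by positivity
    nlinarith
  have hrow1 := rowEstimate lam hpos C hC m₁ m₂ d τ N hτ0 hN hSelR T
  have hrow2 := rowEstimate lam hpos C hC m₂ m₁ (fun j i => d i j) τ N hτ0 hN
    (fun k r c hinj hr hc => hSelC k c r hinj hc hr) T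
  -- final conversion
  have hconv : ∑ i ∈ Finset.range m₁, ∑ j ∈ Finset.range m₂,
      d i j / (((i:ℝ) + 1) * ((j:ℝ) + 1)) = ∑ p ∈ grid, d p.1 p.2 * w p := by
    rw [hgriddef, Finset.sum_product]
    apply Finset.sum_congr rfl
    intro i _
    apply Finset.sum_congr rfl
    intro j _
    rw [hwdef]
    have h1 : ((i:ℝ)+1) ≠ 0 := by positivity
    have h2 : ((j:ℝ)+1) ≠ 0 := by positivity
    field_simp
  rw [hconv, hsplit, hfiber]
  calc ∑ s ∈ Finset.range (T+1), ∑ p ∈ fpos.filter (fun p => lev p.1 p.2 = s), d p.1 p.2 * w p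
      ≤ ∑ s ∈ Finset.range (T+1), (τ / 2 ^ s) * W s := Finset.sum_le_sum (fun s _ => hfiberle s)
  _ ≤ 2 * ∑ t ∈ Finset.range (T+1), (τ / 2 ^ (t+1)) * (Har (A1 t).card * Har (A2 t).card) := habel
  _ ≤ ∑ t ∈ Finset.range (T+1), (τ / 2 ^ (t+1)) * (Har (A1 t).card)^2
        + ∑ t ∈ Finset.range (T+1), (τ / 2 ^ (t+1)) * (Har (A2 t).card)^2 := hamgm
  _ ≤ 10 * C * N + 10 * C * N := add_le_add hrow1 hrow2
  _ = 20 * C * N := by ring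


end GMJaux
end GMJauxsec

namespace GMJaux

lemma nonoverlap_comp (m k : ℕ) (a b : ℕ → ℝ) (r : ℕ → ℕ) (h : Nonoverlap m a b)
    (hr : ∀ ℓ < k, r ℓ < m) (hinj : Set.InjOn r (Finset.range k)) :
    Nonoverlap k (fun ℓ => a (r ℓ)) (fun ℓ => b (r ℓ)) := by
  constructor
  · intro i hi; exact h.1 (r i) (hr i hi)
  · intro i hi j hj hne
    apply h.2 (r i) (hr i hi) (r j) (hr j hj)
    intro he
    exact hne (hinj (Finset.mem_coe.mpr (Finset.mem_range.mpr hi))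
      (Finset.mem_coe.mpr (Finset.mem_range.mpr hj)) he)

end GMJaux

/-- Theorem [GMJ], part a: if `limsup λ_n log(n+1)/n < ∞` then
`Λ^{#}BV ⊆ HBV`. -/
theorem lamSharpBV_subset_HBV
    (lam : ℕ → ℝ) (hmono : Monotone lam) (hpos : ∀ n, 0 < lam n)
    (hbdd : ∃ C : ℝ, ∀ n : ℕ, lam n * Real.log ((n : ℝ) + 2) / ((n : ℝ) + 1) ≤ C)
    (f : ℝ → ℝ → ℝ) (hf : LamSharpBV lam f) :
    HBV f := by

  classical
  obtain ⟨C, hC⟩ := hbdd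
  obtain ⟨M, hV1f, hV2f⟩ := hf
  have hno0 : Nonoverlap 0 (fun _ => (0:ℝ)) (fun _ => (1:ℝ)) :=
    ⟨fun i hi => absurd hi (Nat.not_lt_zero i), fun i hi => absurd hi (Nat.not_lt_zero i)⟩
  have hM0 : 0 ≤ M := by
    have h0 := hV1f 0 (fun _ => 0) (fun _ => 1) (fun _ => 0) hno0
      (fun i hi => absurd hi (Nat.not_lt_zero i))
    simpa using h0
  have hN : (0:ℝ) ≤ 2*M := by linarith
  refine ⟨20*C*(2*M), ?_, ?_, ?_⟩
  · -- HV1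
    intro m a b y hno hy
    have hSelR : ∀ (k : ℕ) (r c : ℕ → ℕ), Set.InjOn r (Finset.range k) →
        (∀ ℓ < k, r ℓ < m) → (∀ ℓ < k, c ℓ < 1) →
        ∑ ℓ ∈ Finset.range k, (fun i (_ : ℕ) => |f (b i) y - f (a i) y|) (r ℓ) (c ℓ) / lam ℓ ≤ 2*M := by
      intro k r c hinj hr hc
      have := hV1f k (fun ℓ => a (r ℓ)) (fun ℓ => b (r ℓ)) (fun _ => y)
        (GMJaux.nonoverlap_comp m k a b r hno hr hinj) (fun i _ => hy)
      simp only [] at this ⊢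
      linarith
    have hSelC : ∀ (k : ℕ) (r c : ℕ → ℕ), Set.InjOn c (Finset.range k) →
        (∀ ℓ < k, r ℓ < m) → (∀ ℓ < k, c ℓ < 1) →
        ∑ ℓ ∈ Finset.range k, (fun i (_ : ℕ) => |f (b i) y - f (a i) y|) (r ℓ) (c ℓ) / lam ℓ ≤ 2*M := by
      intro k r c hinj hr hc
      match k with
      | 0 => simpa using hN
      | 1 =>
        have hinj1 : Set.InjOn r (Finset.range 1) := by
          intro u hu v hv _
          simp only [Finset.coe_range, Set.mem_Iio] at hu hv
          omega
        exact hSelR 1 r c hinj1 hr hc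
      | (k+2) =>
        exfalso
        have h0 : c 0 = 0 := Nat.lt_one_iff.mp (hc 0 (by omega))
        have h1 : c 1 = 0 := Nat.lt_one_iff.mp (hc 1 (by omega))
        have := hinj (Finset.mem_coe.mpr (Finset.mem_range.mpr (by omega : (0:ℕ) < k+2)))
          (Finset.mem_coe.mpr (Finset.mem_range.mpr (by omega : (1:ℕ) < k+2))) (by rw [h0, h1])
        omega
    have hmb := GMJaux.matrixBound lam hpos C hC m 1 (fun i _ => |f (b i) y - f (a i) y|)
      (2*M) hN (fun i j => abs_nonneg _) hSelR hSelC
    have econv : ∑ i ∈ Finset.range m, ∑ j ∈ Finset.range 1,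
        (fun i (_ : ℕ) => |f (b i) y - f (a i) y|) i j / (((i:ℝ) + 1) * ((j:ℝ) + 1))
        = ∑ i ∈ Finset.range m, |f (b i) y - f (a i) y| / ((i:ℝ) + 1) := by
      apply Finset.sum_congr rfl
      intro i _
      rw [Finset.sum_range_one]
      norm_num
    rw [econv] at hmb
    exact hmb
  · -- HV2
    intro m a b x hno hx
    have hSelR : ∀ (k : ℕ) (r c : ℕ → ℕ), Set.InjOn r (Finset.range k) →
        (∀ ℓ < k, r ℓ < m) → (∀ ℓ < k, c ℓ < 1) →
        ∑ ℓ ∈ Finset.range k, (fun j (_ : ℕ) => |f x (b j) - f x (a j)|) (r ℓ) (c ℓ) / lam ℓ ≤ 2*M := by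
      intro k r c hinj hr hc
      have := hV2f k (fun ℓ => a (r ℓ)) (fun ℓ => b (r ℓ)) (fun _ => x)
        (GMJaux.nonoverlap_comp m k a b r hno hr hinj) (fun i _ => hx)
      simp only [] at this ⊢
      linarith
    have hSelC : ∀ (k : ℕ) (r c : ℕ → ℕ), Set.InjOn c (Finset.range k) →
        (∀ ℓ < k, r ℓ < m) → (∀ ℓ < k, c ℓ < 1) →
        ∑ ℓ ∈ Finset.range k, (fun j (_ : ℕ) => |f x (b j) - f x (a j)|) (r ℓ) (c ℓ) / lam ℓ ≤ 2*M := by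
      intro k r c hinj hr hc
      match k with
      | 0 => simpa using hN
      | 1 =>
        have hinj1 : Set.InjOn r (Finset.range 1) := by
          intro u hu v hv _
          simp only [Finset.coe_range, Set.mem_Iio] at hu hv
          omega
        exact hSelR 1 r c hinj1 hr hc
      | (k+2) =>
        exfalso
        have h0 : c 0 = 0 := Nat.lt_one_iff.mp (hc 0 (by omega))
        have h1 : c 1 = 0 := Nat.lt_one_iff.mp (hc 1 (by omega))
        have := hinj (Finset.mem_coe.mpr (Finset.mem_range.mpr (by omega : (0:ℕ) < k+2)))
          (Finset.mem_coe.mpr (Finset.mem_range.mpr (by omega : (1:ℕ) < k+2))) (by rw [h0, h1])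
        omega
    have hmb := GMJaux.matrixBound lam hpos C hC m 1 (fun j _ => |f x (b j) - f x (a j)|)
      (2*M) hN (fun i j => abs_nonneg _) hSelR hSelC
    have econv : ∑ i ∈ Finset.range m, ∑ j ∈ Finset.range 1,
        (fun j (_ : ℕ) => |f x (b j) - f x (a j)|) i j / (((i:ℝ) + 1) * ((j:ℝ) + 1))
        = ∑ j ∈ Finset.range m, |f x (b j) - f x (a j)| / ((j:ℝ) + 1) := by
      apply Finset.sum_congr rfl
      intro i _
      rw [Finset.sum_range_one]
      norm_num
    rw [econv] at hmb
    exact hmb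
  · -- HV12
    intro m₁ a₁ b₁ m₂ a₂ b₂ h₁ h₂
    have hy2 : ∀ j < m₂, a₂ j ∈ Set.Icc (0:ℝ) 1 ∧ b₂ j ∈ Set.Icc (0:ℝ) 1 := by
      intro j hj
      obtain ⟨h1, h2, h3⟩ := h₂.1 j hj
      exact ⟨⟨h1, by linarith⟩, ⟨by linarith, h3⟩⟩
    have hy1 : ∀ i < m₁, a₁ i ∈ Set.Icc (0:ℝ) 1 ∧ b₁ i ∈ Set.Icc (0:ℝ) 1 := by
      intro i hi
      obtain ⟨h1, h2, h3⟩ := h₁.1 i hi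
      exact ⟨⟨h1, by linarith⟩, ⟨by linarith, h3⟩⟩
    have hSelR : ∀ (k : ℕ) (r c : ℕ → ℕ), Set.InjOn r (Finset.range k) →
        (∀ ℓ < k, r ℓ < m₁) → (∀ ℓ < k, c ℓ < m₂) →
        ∑ ℓ ∈ Finset.range k, (fun i j =>
          |f (a₁ i) (a₂ j) - f (a₁ i) (b₂ j) - f (b₁ i) (a₂ j) + f (b₁ i) (b₂ j)|) (r ℓ) (c ℓ) / lam ℓ
          ≤ 2*M := by
      intro k r c hinj hr hc
      have hT1 := hV1f k (fun ℓ => a₁ (r ℓ)) (fun ℓ => b₁ (r ℓ)) (fun ℓ => a₂ (c ℓ))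
        (GMJaux.nonoverlap_comp m₁ k a₁ b₁ r h₁ hr hinj)
        (fun ℓ hℓ => (hy2 (c ℓ) (hc ℓ hℓ)).1)
      have hT2 := hV1f k (fun ℓ => a₁ (r ℓ)) (fun ℓ => b₁ (r ℓ)) (fun ℓ => b₂ (c ℓ))
        (GMJaux.nonoverlap_comp m₁ k a₁ b₁ r h₁ hr hinj)
        (fun ℓ hℓ => (hy2 (c ℓ) (hc ℓ hℓ)).2)
      simp only [] at hT1 hT2 ⊢
      have hsum : ∑ ℓ ∈ Finset.range k,
          |f (a₁ (r ℓ)) (a₂ (c ℓ)) - f (a₁ (r ℓ)) (b₂ (c ℓ)) - f (b₁ (r ℓ)) (a₂ (c ℓ))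
            + f (b₁ (r ℓ)) (b₂ (c ℓ))| / lam ℓ
          ≤ ∑ ℓ ∈ Finset.range k,
            (|f (b₁ (r ℓ)) (a₂ (c ℓ)) - f (a₁ (r ℓ)) (a₂ (c ℓ))| / lam ℓ
              + |f (b₁ (r ℓ)) (b₂ (c ℓ)) - f (a₁ (r ℓ)) (b₂ (c ℓ))| / lam ℓ) := by
        apply Finset.sum_le_sum
        intro ℓ _
        have hlam := hpos ℓ
        have habs : |f (a₁ (r ℓ)) (a₂ (c ℓ)) - f (a₁ (r ℓ)) (b₂ (c ℓ)) - f (b₁ (r ℓ)) (a₂ (c ℓ))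
            + f (b₁ (r ℓ)) (b₂ (c ℓ))|
            ≤ |f (b₁ (r ℓ)) (a₂ (c ℓ)) - f (a₁ (r ℓ)) (a₂ (c ℓ))|
              + |f (b₁ (r ℓ)) (b₂ (c ℓ)) - f (a₁ (r ℓ)) (b₂ (c ℓ))| := by
          have e : f (a₁ (r ℓ)) (a₂ (c ℓ)) - f (a₁ (r ℓ)) (b₂ (c ℓ)) - f (b₁ (r ℓ)) (a₂ (c ℓ))
              + f (b₁ (r ℓ)) (b₂ (c ℓ))
              = (f (b₁ (r ℓ)) (b₂ (c ℓ)) - f (a₁ (r ℓ)) (b₂ (c ℓ)))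
                - (f (b₁ (r ℓ)) (a₂ (c ℓ)) - f (a₁ (r ℓ)) (a₂ (c ℓ))) := by ring
          rw [e]
          have := abs_sub (f (b₁ (r ℓ)) (b₂ (c ℓ)) - f (a₁ (r ℓ)) (b₂ (c ℓ)))
            (f (b₁ (r ℓ)) (a₂ (c ℓ)) - f (a₁ (r ℓ)) (a₂ (c ℓ)))
          linarith
        rw [← add_div]
        exact div_le_div_of_nonneg_right habs hlam.le
      rw [Finset.sum_add_distrib] at hsum
      linarith
    have hSelC : ∀ (k : ℕ) (r c : ℕ → ℕ), Set.InjOn c (Finset.range k) →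
        (∀ ℓ < k, r ℓ < m₁) → (∀ ℓ < k, c ℓ < m₂) →
        ∑ ℓ ∈ Finset.range k, (fun i j =>
          |f (a₁ i) (a₂ j) - f (a₁ i) (b₂ j) - f (b₁ i) (a₂ j) + f (b₁ i) (b₂ j)|) (r ℓ) (c ℓ) / lam ℓ
          ≤ 2*M := by
      intro k r c hinj hr hc
      have hT1 := hV2f k (fun ℓ => a₂ (c ℓ)) (fun ℓ => b₂ (c ℓ)) (fun ℓ => a₁ (r ℓ))
        (GMJaux.nonoverlap_comp m₂ k a₂ b₂ c h₂ hc hinj)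
        (fun ℓ hℓ => (hy1 (r ℓ) (hr ℓ hℓ)).1)
      have hT2 := hV2f k (fun ℓ => a₂ (c ℓ)) (fun ℓ => b₂ (c ℓ)) (fun ℓ => b₁ (r ℓ))
        (GMJaux.nonoverlap_comp m₂ k a₂ b₂ c h₂ hc hinj)
        (fun ℓ hℓ => (hy1 (r ℓ) (hr ℓ hℓ)).2)
      simp only [] at hT1 hT2 ⊢
      have hsum : ∑ ℓ ∈ Finset.range k,
          |f (a₁ (r ℓ)) (a₂ (c ℓ)) - f (a₁ (r ℓ)) (b₂ (c ℓ)) - f (b₁ (r ℓ)) (a₂ (c ℓ))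
            + f (b₁ (r ℓ)) (b₂ (c ℓ))| / lam ℓ
          ≤ ∑ ℓ ∈ Finset.range k,
            (|f (a₁ (r ℓ)) (b₂ (c ℓ)) - f (a₁ (r ℓ)) (a₂ (c ℓ))| / lam ℓ
              + |f (b₁ (r ℓ)) (b₂ (c ℓ)) - f (b₁ (r ℓ)) (a₂ (c ℓ))| / lam ℓ) := by
        apply Finset.sum_le_sum
        intro ℓ _
        have hlam := hpos ℓ
        have habs : |f (a₁ (r ℓ)) (a₂ (c ℓ)) - f (a₁ (r ℓ)) (b₂ (c ℓ)) - f (b₁ (r ℓ)) (a₂ (c ℓ))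
            + f (b₁ (r ℓ)) (b₂ (c ℓ))|
            ≤ |f (a₁ (r ℓ)) (b₂ (c ℓ)) - f (a₁ (r ℓ)) (a₂ (c ℓ))|
              + |f (b₁ (r ℓ)) (b₂ (c ℓ)) - f (b₁ (r ℓ)) (a₂ (c ℓ))| := by
          have e : f (a₁ (r ℓ)) (a₂ (c ℓ)) - f (a₁ (r ℓ)) (b₂ (c ℓ)) - f (b₁ (r ℓ)) (a₂ (c ℓ))
              + f (b₁ (r ℓ)) (b₂ (c ℓ))
              = (f (b₁ (r ℓ)) (b₂ (c ℓ)) - f (b₁ (r ℓ)) (a₂ (c ℓ)))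
                - (f (a₁ (r ℓ)) (b₂ (c ℓ)) - f (a₁ (r ℓ)) (a₂ (c ℓ))) := by ring
          rw [e]
          have := abs_sub (f (b₁ (r ℓ)) (b₂ (c ℓ)) - f (b₁ (r ℓ)) (a₂ (c ℓ)))
            (f (a₁ (r ℓ)) (b₂ (c ℓ)) - f (a₁ (r ℓ)) (a₂ (c ℓ)))
          linarith
        rw [← add_div]
        exact div_le_div_of_nonneg_right habs hlam.le
      rw [Finset.sum_add_distrib] at hsum
      linarith
    have hmb := GMJaux.matrixBound lam hpos C hC m₁ m₂ (fun i j =>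
        |f (a₁ i) (a₂ j) - f (a₁ i) (b₂ j) - f (b₁ i) (a₂ j) + f (b₁ i) (b₂ j)|)
      (2*M) hN (fun i j => abs_nonneg _) hSelR hSelC
    exact hmb
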